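/- For d prime, any integer λ with 1 ≤ |λ| ≤ d-1, and any integer μ with 0 ≤ |μ| ≤ d-1, the absolute value of the sum ∑_{k=0}^{d-1} exp(iπ[k(d-k)λ + 2kμ]/d) equals √d. -/

import Mathlib

open Complex Finset

-- magnitude of generalized quadratic Gauss sum over ZMod d, d odd prime
lemma gauss_sq (d : ℕ) [NeZero d] (hd : d.Prime) (hodd : d ≠ 2) (a b : ZMod d) (ha : a ≠ 0) :
    (∑ x : ZMod d, ZMod.stdAddChar (a * x ^ 2 + b * x)) *
      (starRingEnd ℂ) (∑ x : ZMod d, ZMod.stdAddChar (a * x ^ 2 + b * x)) = (d : ℂ) := by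
  haveI := Fact.mk hd
  set ψ : AddChar (ZMod d) ℂ := ZMod.stdAddChar with hψ
  have h2 : (2 : ZMod d) ≠ 0 := by
    have : ((2 : ℕ) : ZMod d) ≠ 0 := by
      rw [Ne, ZMod.natCast_eq_zero_iff]
      intro h
      exact hodd ((Nat.prime_dvd_prime_iff_eq hd Nat.prime_two).mp h)
    simpa using this
  rw [map_sum, Finset.sum_mul_sum]
  have step1 : ∀ x y : ZMod d,
      ψ (a * x ^ 2 + b * x) * (starRingEnd ℂ) (ψ (a * y ^ 2 + b * y)) =
        ψ ((a * x ^ 2 + b * x) - (a * y ^ 2 + b * y)) := by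
    intro x y
    rw [← AddChar.map_neg_eq_conj, ← AddChar.map_add_eq_mul, sub_eq_add_neg]
  simp_rw [step1]
  rw [Finset.sum_comm]
  have step2 : ∀ y : ZMod d,
      (∑ x : ZMod d, ψ ((a * x ^ 2 + b * x) - (a * y ^ 2 + b * y))) =
        ∑ t : ZMod d, ψ (a * t ^ 2 + b * t) * ψ (y * (2 * a * t)) := by
    intro y
    rw [← Fintype.sum_equiv (Equiv.addLeft y)
      (fun t => ψ (a * t ^ 2 + b * t) * ψ (y * (2 * a * t)))
      (fun x => ψ ((a * x ^ 2 + b * x) - (a * y ^ 2 + b * y)))]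
    intro t
    rw [← AddChar.map_add_eq_mul]
    congr 1
    simp only [Equiv.coe_addLeft]
    ring
  simp_rw [step2]
  rw [Finset.sum_comm]
  have step3 : ∀ t : ZMod d,
      (∑ y : ZMod d, ψ (a * t ^ 2 + b * t) * ψ (y * (2 * a * t))) =
        if t = 0 then (d : ℂ) else 0 := by
    intro t
    rw [← Finset.mul_sum, AddChar.sum_mulShift _ (ZMod.isPrimitive_stdAddChar d)]
    by_cases ht : t = 0
    · simp [ht, ZMod.card]
    · have : 2 * a * t ≠ 0 := by
        exact mul_ne_zero (mul_ne_zero h2 ha) ht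
      simp [this, ht]
  simp_rw [step3]
  simp

lemma sum_range_eq (d : ℕ) [NeZero d] (f : ZMod d → ℂ) :
    ∑ k ∈ Finset.range d, f (k : ZMod d) = ∑ x : ZMod d, f x := by
  exact Finset.sum_nbij' (fun k => ((k : ZMod d))) (fun x => x.val)
    (fun k _ => Finset.mem_univ _) (fun x _ => Finset.mem_range.mpr (ZMod.val_lt x))
    (fun k hk => ZMod.val_natCast_of_lt (Finset.mem_range.mp hk))
    (fun x _ => ZMod.natCast_zmod_val x) (fun k _ => rfl)

lemma term_eq (d : ℕ) [NeZero d] (hd : d.Prime) (hodd : d ≠ 2) (lam mu : ℤ)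
    (k : ℕ) (hk : k < d) :
    Complex.exp (Complex.I * (Real.pi : ℂ) *
        (((k : ℂ) * ((d : ℂ) - (k : ℂ)) * (lam : ℂ) + 2 * (k : ℂ) * (mu : ℂ)) / (d : ℂ))) =
    ZMod.stdAddChar (-(lam : ZMod d) * (2 : ZMod d)⁻¹ * (k : ZMod d) ^ 2
      + (mu : ZMod d) * (k : ZMod d)) := by
  haveI := Fact.mk hd
  have h2 : (2 : ZMod d) ≠ 0 := by
    have : ((2 : ℕ) : ZMod d) ≠ 0 := by
      rw [Ne, ZMod.natCast_eq_zero_iff]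
      intro h
      exact hodd ((Nat.prime_dvd_prime_iff_eq hd Nat.prime_two).mp h)
    simpa using this
  have hdodd : Odd (d : ℤ) := by
    exact_mod_cast hd.odd_of_ne_two hodd
  -- evenness
  have heven : Even ((k : ℤ) * ((d : ℤ) - (k : ℤ)) * lam + 2 * (k : ℤ) * mu) := by
    have h1 : Even ((k : ℤ) * ((d : ℤ) - (k : ℤ))) := by
      rcases Int.even_or_odd (k : ℤ) with he | ho
      · exact he.mul_right _
      · exact (hdodd.sub_odd ho).mul_left _
    exact (h1.mul_right _).add ⟨(k : ℤ) * mu, by ring⟩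
  obtain ⟨c, hc⟩ := heven
  have hc2 : (k : ℤ) * ((d : ℤ) - (k : ℤ)) * lam + 2 * (k : ℤ) * mu = 2 * c := by
    rw [hc]; ring
  have hdne : (d : ℂ) ≠ 0 := by
    exact_mod_cast Nat.cast_ne_zero.mpr hd.ne_zero
  have harg : Complex.I * (Real.pi : ℂ) *
        (((k : ℂ) * ((d : ℂ) - (k : ℂ)) * (lam : ℂ) + 2 * (k : ℂ) * (mu : ℂ)) / (d : ℂ))
      = 2 * (Real.pi : ℂ) * Complex.I * (c : ℂ) / (d : ℂ) := by
    have : ((k : ℂ) * ((d : ℂ) - (k : ℂ)) * (lam : ℂ) + 2 * (k : ℂ) * (mu : ℂ))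
        = 2 * (c : ℂ) := by
      exact_mod_cast congrArg (fun n : ℤ => (n : ℂ)) hc2
    rw [this]; ring
  rw [harg, ← ZMod.stdAddChar_coe]
  congr 1
  apply mul_left_cancel₀ h2
  have lhs : (2 : ZMod d) * ((c : ℤ) : ZMod d) = -(lam : ZMod d) * (k : ZMod d) ^ 2
      + 2 * (mu : ZMod d) * (k : ZMod d) := by
    have : (((2 * c : ℤ)) : ZMod d) =
        (((k : ℤ) * ((d : ℤ) - (k : ℤ)) * lam + 2 * (k : ℤ) * mu : ℤ) : ZMod d) := by
      rw [hc2]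
    push_cast [ZMod.natCast_self] at this
    push_cast
    rw [this]
    ring
  rw [lhs]
  have h22 : (2 : ZMod d) * (2 : ZMod d)⁻¹ = 1 := mul_inv_cancel₀ h2
  calc -(lam : ZMod d) * (k : ZMod d) ^ 2 + 2 * (mu : ZMod d) * (k : ZMod d)
      = ((2 : ZMod d) * (2 : ZMod d)⁻¹) * (-(lam : ZMod d) * (k : ZMod d) ^ 2)
        + 2 * ((mu : ZMod d) * (k : ZMod d)) := by rw [h22]; ring
    _ = 2 * (-(lam : ZMod d) * (2 : ZMod d)⁻¹ * (k : ZMod d) ^ 2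
        + (mu : ZMod d) * (k : ZMod d)) := by ring

/-- For `d` prime, integers `λ`, `μ` with `1 ≤ |λ| ≤ d-1` and `|μ| ≤ d-1`,
the absolute value of `∑_{k=0}^{d-1} exp(iπ[k(d-k)λ + 2kμ]/d)` equals `√d`. -/
theorem stmt_0 (d : ℕ) (hd : d.Prime) (lam mu : ℤ)
    (hlam1 : 1 ≤ |lam|) (hlam2 : |lam| ≤ (d : ℤ) - 1) (hmu : |mu| ≤ (d : ℤ) - 1) :
    ‖(∑ k ∈ Finset.range d,
      Complex.exp (Complex.I * (Real.pi : ℂ) *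
        (((k : ℂ) * ((d : ℂ) - (k : ℂ)) * (lam : ℂ) + 2 * (k : ℂ) * (mu : ℂ)) / (d : ℂ))))‖ =
    Real.sqrt d := by
  by_cases hd2 : d = 2
  · -- d = 2
    subst hd2
    have hlam : lam = 1 ∨ lam = -1 := by
      have h1 : |lam| = 1 := le_antisymm (by exact_mod_cast hlam2) hlam1
      exact (abs_eq (by norm_num)).mp h1
    have hm : ∃ j : ℤ, lam + 2 * mu = 2 * j + 1 := by
      rcases hlam with h | h
      · exact ⟨mu, by omega⟩
      · exact ⟨mu - 1, by omega⟩
    obtain ⟨j, hj⟩ := hm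
    rw [Finset.sum_range_succ, Finset.sum_range_one]
    have t0 : Complex.exp (Complex.I * (Real.pi : ℂ) *
        ((((0:ℕ) : ℂ) * (((2:ℕ) : ℂ) - ((0:ℕ) : ℂ)) * (lam : ℂ)
          + 2 * ((0:ℕ) : ℂ) * (mu : ℂ)) / ((2:ℕ) : ℂ))) = 1 := by
      norm_num
    have harg : Complex.I * (Real.pi : ℂ) *
        ((((1:ℕ) : ℂ) * (((2:ℕ) : ℂ) - ((1:ℕ) : ℂ)) * (lam : ℂ)
          + 2 * ((1:ℕ) : ℂ) * (mu : ℂ)) / ((2:ℕ) : ℂ))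
        = ((lam + 2 * mu : ℤ) : ℂ) * ((Real.pi : ℂ) / 2 * Complex.I) := by
      push_cast
      ring
    have hI : Complex.exp ((Real.pi : ℂ) / 2 * Complex.I) = Complex.I := by
      have hcast : (Real.pi : ℂ) / 2 = ((Real.pi / 2 : ℝ) : ℂ) := by push_cast; ring
      rw [hcast, Complex.exp_mul_I, ← Complex.ofReal_cos, ← Complex.ofReal_sin,
        Real.cos_pi_div_two, Real.sin_pi_div_two]
      simp
    have t1 : Complex.exp (Complex.I * (Real.pi : ℂ) *
        ((((1:ℕ) : ℂ) * (((2:ℕ) : ℂ) - ((1:ℕ) : ℂ)) * (lam : ℂ)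
          + 2 * ((1:ℕ) : ℂ) * (mu : ℂ)) / ((2:ℕ) : ℂ)))
        = (-1 : ℂ) ^ j * Complex.I := by
      rw [harg, Complex.exp_int_mul, hI, hj]
      rw [zpow_add₀ Complex.I_ne_zero, zpow_one, zpow_mul]
      congr 2
      rw [zpow_two, Complex.I_mul_I]
    rw [t0, t1]
    rcases Int.even_or_odd j with he | ho
    · rw [he.neg_one_zpow]
      rw [Complex.norm_def]
      norm_num [Complex.normSq_apply]
    · rw [ho.neg_one_zpow]
      rw [Complex.norm_def]
      norm_num [Complex.normSq_apply]
  · -- d odd prime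
    haveI := Fact.mk hd
    haveI : NeZero d := ⟨hd.ne_zero⟩
    have h2 : (2 : ZMod d) ≠ 0 := by
      have : ((2 : ℕ) : ZMod d) ≠ 0 := by
        rw [Ne, ZMod.natCast_eq_zero_iff]
        intro h
        exact hd2 ((Nat.prime_dvd_prime_iff_eq hd Nat.prime_two).mp h)
      simpa using this
    have hlamne : ((lam : ZMod d)) ≠ 0 := by
      rw [Ne, ZMod.intCast_zmod_eq_zero_iff_dvd]
      intro h
      have := Int.le_of_dvd (by linarith) ((dvd_abs _ _).mpr h)
      omega
    set a : ZMod d := -(lam : ZMod d) * (2 : ZMod d)⁻¹ with ha_def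
    have ha : a ≠ 0 := by
      exact mul_ne_zero (neg_ne_zero.mpr hlamne) (inv_ne_zero h2)
    have hrw : (∑ k ∈ Finset.range d,
        Complex.exp (Complex.I * (Real.pi : ℂ) *
          (((k : ℂ) * ((d : ℂ) - (k : ℂ)) * (lam : ℂ) + 2 * (k : ℂ) * (mu : ℂ)) / (d : ℂ))))
        = ∑ x : ZMod d, ZMod.stdAddChar (a * x ^ 2 + (mu : ZMod d) * x) := by
      rw [← sum_range_eq d (fun x => ZMod.stdAddChar (a * x ^ 2 + (mu : ZMod d) * x))]
      refine Finset.sum_congr rfl fun k hk => ?_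
      exact term_eq d hd hd2 lam mu k (Finset.mem_range.mp hk)
    rw [hrw]
    set S : ℂ := ∑ x : ZMod d, ZMod.stdAddChar (a * x ^ 2 + (mu : ZMod d) * x) with hS
    have hsq := gauss_sq d hd hd2 a (mu : ZMod d) ha
    rw [← hS] at hsq
    rw [Complex.mul_conj] at hsq
    have hns : Complex.normSq S = (d : ℝ) := by
      exact_mod_cast hsq
    rw [Complex.norm_def, hns]
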